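/- (W construction, star form) Let N ≥ 2 and consider the edge relation E on Fin N given by E a j ↔ (a = j ∨ a = 0 ∨ j = 0), with colors C a j = false if a = 0 and C a j = true if a ≠ 0. Then: (1) the perfect matchings of E are exactly the identity together with the transpositions Equiv.swap 0 k for k ≠ 0, so there are exactly N perfect matchings; (2) the outcome string of the identity is false exactly at coordinate 0 and the outcome string of Equiv.swap 0 k is false exactly at coordinate k; hence the outcome strings of the perfect matchings are exactly the N strings with a single false coordinate, each arising from exactly one perfect matching (the N-partite W state). -/

import Mathlib

open scoped Classical

/-- W construction, star form: On `Fin N` (`N ≥ 2`) with edge relation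
`E a j ↔ (a = j ∨ a = 0 ∨ j = 0)` and colors `C a j = false` iff `a = 0`:
(1) the perfect matchings of `E` are exactly the identity together with the
transpositions `swap 0 k` for `k ≠ 0`, so there are exactly `N` of them;
(2) the outcome string of the identity is `false` exactly at coordinate `0` and that of
`swap 0 k` is `false` exactly at coordinate `k`; hence the outcome-string map is a
bijection from the perfect matchings onto the `N` strings with a single `false`
coordinate (the `N`-partite W state). -/
theorem w_star_construction (N : ℕ) [NeZero N] (hN : 2 ≤ N)
    (E : Fin N → Fin N → Prop)
    (hE : ∀ a j, E a j ↔ (a = j ∨ a = 0 ∨ j = 0))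
    (C : Fin N → Fin N → Bool)
    (hC : ∀ a j, C a j = if a = 0 then false else true) :
    ({σ : Equiv.Perm (Fin N) | ∀ a, E a (σ a)} =
      {Equiv.refl (Fin N)} ∪
        {σ : Equiv.Perm (Fin N) | ∃ k : Fin N, k ≠ 0 ∧ σ = Equiv.swap 0 k}) ∧
    ((Finset.univ.filter
      (fun σ : Equiv.Perm (Fin N) => ∀ a, E a (σ a))).card = N) ∧
    (∀ j : Fin N, C ((Equiv.refl (Fin N))⁻¹ j) j = false ↔ j = 0) ∧
    (∀ k : Fin N, k ≠ 0 →
      ∀ j : Fin N, C ((Equiv.swap 0 k)⁻¹ j) j = false ↔ j = k) ∧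
    Set.BijOn (fun σ : Equiv.Perm (Fin N) => fun j => C (σ⁻¹ j) j)
      {σ : Equiv.Perm (Fin N) | ∀ a, E a (σ a)}
      {s : Fin N → Bool | (Finset.univ.filter (fun j => s j = false)).card = 1} := by

  classical
  -- outcome string lemma: false exactly at σ 0
  have hout : ∀ (σ : Equiv.Perm (Fin N)) (j : Fin N),
      (C (σ⁻¹ j) j = false ↔ j = σ 0) := by
    intro σ j
    rw [hC]
    by_cases h : σ⁻¹ j = 0
    · have : j = σ 0 := by
        have := congrArg σ h
        simpa using this
      simp [h, this]
    · have hne : j ≠ σ 0 := by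
        intro hj
        apply h
        rw [hj]
        simp
      have h' : ¬ σ.symm j = 0 := h
      simp [h', hne]
  -- characterization of perfect matchings
  have hchar : ∀ σ : Equiv.Perm (Fin N),
      (∀ a, E a (σ a)) ↔
        (σ = Equiv.refl (Fin N) ∨ ∃ k : Fin N, k ≠ 0 ∧ σ = Equiv.swap 0 k) := by
    intro σ
    constructor
    · intro h
      by_cases h0 : σ 0 = 0
      · left
        ext a
        by_cases ha : a = 0
        · simp [ha, h0]
        · rcases (hE a (σ a)).1 (h a) with h1 | h1 | h1
          · simp [← h1]
          · exact absurd h1 ha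
          · exact absurd (σ.injective (h1.trans h0.symm)) ha
      · right
        refine ⟨σ 0, h0, ?_⟩
        have hs0 : σ (σ 0) = 0 := by
          rcases (hE (σ 0) (σ (σ 0))).1 (h (σ 0)) with h1 | h1 | h1
          · exact absurd (σ.injective h1).symm h0
          · exact absurd h1 h0
          · exact h1
        ext a
        by_cases ha : a = 0
        · simp [ha]
        · by_cases ha2 : a = σ 0
          · rw [ha2, hs0, Equiv.swap_apply_right]
          · rcases (hE a (σ a)).1 (h a) with h1 | h1 | h1
            · rw [← h1, Equiv.swap_apply_of_ne_of_ne ha ha2]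
            · exact absurd h1 ha
            · exact absurd (σ.injective (h1.trans hs0.symm)) ha2
    · rintro (rfl | ⟨k, hk, rfl⟩) <;> intro a <;> rw [hE]
      · left; rfl
      · by_cases ha : a = 0
        · right; left; exact ha
        · by_cases ha2 : a = k
          · right; right; rw [ha2, Equiv.swap_apply_right]
          · left; rw [Equiv.swap_apply_of_ne_of_ne ha ha2]
  -- canonical perfect matching with value k at 0
  set f : Fin N → Equiv.Perm (Fin N) :=
    fun k => if k = 0 then Equiv.refl (Fin N) else Equiv.swap 0 k with hf
  have hf0 : ∀ k, (f k) 0 = k := by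
    intro k; by_cases hk : k = 0 <;> simp [hf, hk]
  have hfinj : Function.Injective f := fun k k' h => by
    rw [← hf0 k, ← hf0 k', h]
  have hfpm : ∀ k, ∀ a, E a ((f k) a) := by
    intro k
    rw [hchar]
    by_cases hk : k = 0
    · left; simp [hf, hk]
    · right; exact ⟨k, hk, by simp [hf, hk]⟩
  have hform : ∀ σ : Equiv.Perm (Fin N), (∀ a, E a (σ a)) → σ = f (σ 0) := by
    intro σ hσ
    rcases (hchar σ).1 hσ with rfl | ⟨k, hk, rfl⟩
    · simp [hf]
    · rw [Equiv.swap_apply_left]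
      simp [hf, hk]
  refine ⟨?_, ?_, ?_, ?_, ?_, ?_, ?_⟩
  · ext σ
    simp only [Set.mem_setOf_eq, Set.mem_union, Set.mem_singleton_iff]
    exact hchar σ
  · have himg : Finset.univ.filter (fun σ : Equiv.Perm (Fin N) => ∀ a, E a (σ a))
        = Finset.univ.image f := by
      ext σ
      simp only [Finset.mem_filter, Finset.mem_image, Finset.mem_univ, true_and]
      constructor
      · intro h; exact ⟨σ 0, (hform σ h).symm⟩
      · rintro ⟨k, rfl⟩; exact hfpm k
    rw [himg, Finset.card_image_of_injective _ hfinj, Finset.card_univ, Fintype.card_fin]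
  · intro j
    simpa using hout (Equiv.refl (Fin N)) j
  · intro k hk j
    simpa using hout (Equiv.swap 0 k) j
  · intro σ hσ
    simp only [Set.mem_setOf_eq]
    have : Finset.univ.filter (fun j => C (σ⁻¹ j) j = false) = {σ 0} := by
      ext j
      simp only [Finset.mem_filter, Finset.mem_univ, true_and, Finset.mem_singleton]
      exact hout σ j
    rw [this, Finset.card_singleton]
  · intro σ1 h1 σ2 h2 heq
    have hfe : C (σ1⁻¹ (σ1 0)) (σ1 0) = C (σ2⁻¹ (σ1 0)) (σ1 0) := by
      exact congrFun heq (σ1 0)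
    have h10 : C (σ1⁻¹ (σ1 0)) (σ1 0) = false := (hout σ1 (σ1 0)).2 rfl
    have h20 : σ1 0 = σ2 0 := (hout σ2 (σ1 0)).1 (hfe ▸ h10)
    rw [hform σ1 h1, hform σ2 h2, h20]
  · intro s hs
    rw [Set.mem_setOf_eq] at hs
    obtain ⟨c, hc⟩ := Finset.card_eq_one.mp hs
    have hsc : ∀ j, s j = false ↔ j = c := by
      intro j
      have := Finset.ext_iff.mp hc j
      simpa using this
    refine ⟨f c, hfpm c, ?_⟩
    funext j
    have h1 : (C ((f c)⁻¹ j) j = false) ↔ (s j = false) := by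
      rw [hout, hf0]
      exact (hsc j).symm
    show C ((f c)⁻¹ j) j = s j
    cases hsj : s j
    · exact h1.mpr hsj
    · cases hCj : C ((f c)⁻¹ j) j
      · exact absurd (h1.mp hCj) (by simp [hsj])
      · rfl
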